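/- Suppose there exists c ≥ 0 such that u^c·Sⁿ is contained in the image of X (as an S-linear map Sⁿ → Sⁿ). Then: (1) there exists Y ∈ Mₙ(S) with X·Y = Y·X = u^c·Iₙ; (2) det(X) is a nonzerodivisor in S, so X: Sⁿ → Sⁿ is injective; (3) the cokernel Sⁿ/X·Sⁿ is a flat A-module. (This is the statement that for a φ-module of height ≤ h with coefficients in A, the map φ is injective and its cokernel is A-flat.) -/

import Mathlib

section Aux

variable (A : Type*) [CommRing A]

/-- Coefficientwise shift-down by `c`. -/
noncomputable def psShift (c : ℕ) : PowerSeries A →ₗ[A] PowerSeries A where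
  toFun f := PowerSeries.mk fun d => PowerSeries.coeff (R := A) (d + c) f
  map_add' f g := by ext d; simp
  map_smul' a f := by ext d; simp

/-- Truncation below degree `c`, as a power series. -/
noncomputable def psTrunc (c : ℕ) : PowerSeries A →ₗ[A] PowerSeries A where
  toFun f := PowerSeries.mk fun d => if d < c then PowerSeries.coeff (R := A) d f else 0
  map_add' f g := by ext d; by_cases hd : d < c <;> simp [hd]
  map_smul' a f := by ext d; by_cases hd : d < c <;> simp [hd]

variable {A}

lemma psShift_X_pow_mul (c : ℕ) (f : PowerSeries A) :
    psShift A c ((PowerSeries.X ^ c : PowerSeries A) * f) = f := by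
  ext d
  simp [psShift, PowerSeries.coeff_X_pow_mul]

lemma coeff_psTrunc (c d : ℕ) (f : PowerSeries A) :
    PowerSeries.coeff (R := A) d (psTrunc A c f) = if d < c then PowerSeries.coeff (R := A) d f else 0 := by
  simp [psTrunc]

lemma psTrunc_psTrunc (c : ℕ) (f : PowerSeries A) :
    psTrunc A c (psTrunc A c f) = psTrunc A c f := by
  ext d
  by_cases hd : d < c <;> simp [coeff_psTrunc, hd]

lemma sub_psTrunc_dvd (c : ℕ) (f : PowerSeries A) :
    ∃ r : PowerSeries A, f - psTrunc A c f = (PowerSeries.X ^ c : PowerSeries A) * r := by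
  have : (PowerSeries.X ^ c : PowerSeries A) ∣ f - psTrunc A c f := by
    rw [PowerSeries.X_pow_dvd_iff]
    intro m hm
    simp [coeff_psTrunc, hm]
  exact this

lemma psTrunc_eq_sum (c : ℕ) (f : PowerSeries A) :
    psTrunc A c f =
      ∑ d : Fin c, PowerSeries.coeff (R := A) (d : ℕ) f • (PowerSeries.X : PowerSeries A) ^ (d : ℕ) := by
  ext m
  rw [coeff_psTrunc, map_sum]
  by_cases hm : m < c
  · rw [if_pos hm, Finset.sum_eq_single (⟨m, hm⟩ : Fin c)]
    · simp [PowerSeries.coeff_X_pow]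
    · intro b _ hb
      have hne : m ≠ (b : ℕ) := by
        intro h; apply hb; ext; simp [← h]
      simp [PowerSeries.coeff_X_pow, hne]
    · simp
  · rw [if_neg hm]
    symm
    apply Finset.sum_eq_zero
    intro b _
    have hne : m ≠ (b : ℕ) := by
      intro h; exact hm (h ▸ b.isLt)
    simp [PowerSeries.coeff_X_pow, hne]

lemma X_pow_regular (c : ℕ) (a : PowerSeries A)
    (h : a * (PowerSeries.X : PowerSeries A) ^ c = 0) : a = 0 := by
  ext d
  have h2 := congrArg (PowerSeries.coeff (R := A) (d + c)) h
  rwa [PowerSeries.coeff_mul_X_pow, map_zero] at h2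

end Aux

set_option maxHeartbeats 1000000 in
/-- If `u^c·Sⁿ ⊆ X·Sⁿ` for `S = A[[u]]`, then `X` has an inverse up to `u^c`, `det X` is a
nonzerodivisor (so `X` is injective), and the cokernel of `X` is flat over `A`. -/
theorem stmt12 (A : Type*) [CommRing A] (n : ℕ) (hn : 1 ≤ n)
    (X : Matrix (Fin n) (Fin n) (PowerSeries A)) (c : ℕ)
    (hc : ∀ v : Fin n → PowerSeries A, ∃ w : Fin n → PowerSeries A,
      X.mulVec w = (PowerSeries.X ^ c : PowerSeries A) • v) :
    (∃ Y : Matrix (Fin n) (Fin n) (PowerSeries A),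
        X * Y = (PowerSeries.X ^ c : PowerSeries A) • (1 : Matrix (Fin n) (Fin n) (PowerSeries A)) ∧
        Y * X = (PowerSeries.X ^ c : PowerSeries A) • (1 : Matrix (Fin n) (Fin n) (PowerSeries A))) ∧
    X.det ∈ nonZeroDivisors (PowerSeries A) ∧
    Function.Injective (X.mulVec : (Fin n → PowerSeries A) → (Fin n → PowerSeries A)) ∧
    Module.Flat A ((Fin n → PowerSeries A) ⧸
      LinearMap.range (LinearMap.restrictScalars A (Matrix.mulVecLin X))) := by
  classical
  choose W hW using hc
  let Y : Matrix (Fin n) (Fin n) (PowerSeries A) := Matrix.of fun i j => W (Pi.single j 1) i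
  have hXY : X * Y = (PowerSeries.X ^ c : PowerSeries A) • (1 : Matrix (Fin n) (Fin n) (PowerSeries A)) := by
    ext i j : 2
    have h1 := congrFun (hW (Pi.single j 1)) i
    simp only [Matrix.mulVec, dotProduct] at h1
    simp only [Matrix.mul_apply, Matrix.smul_apply, Matrix.one_apply, Y, Matrix.of_apply]
    rw [h1]
    simp [Pi.single_apply]
  have hdetprod : X.det * Y.det = ((PowerSeries.X : PowerSeries A) ^ c) ^ n := by
    rw [← Matrix.det_mul, hXY, Matrix.det_smul, Matrix.det_one, mul_one, Fintype.card_fin]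
  have hdet : X.det ∈ nonZeroDivisors (PowerSeries A) := by
    rw [mem_nonZeroDivisors_iff_right]
    intro a ha
    have h2 : a * (((PowerSeries.X : PowerSeries A) ^ c) ^ n) = 0 := by
      rw [← hdetprod, ← mul_assoc, ha, zero_mul]
    rw [← pow_mul] at h2
    exact X_pow_regular _ _ h2
  have hcancel : ∀ M : Matrix (Fin n) (Fin n) (PowerSeries A), X * M = 0 → M = 0 := by
    intro M hM
    have h1 : X.det • M = 0 := by
      calc X.det • M = (X.det • (1 : Matrix (Fin n) (Fin n) (PowerSeries A))) * M := by
            rw [Matrix.smul_mul, one_mul]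
        _ = X.adjugate * (X * M) := by rw [← Matrix.adjugate_mul, Matrix.mul_assoc]
        _ = 0 := by rw [hM, Matrix.mul_zero]
    refine Matrix.ext fun i j => ?_
    have h3 := congrFun (congrFun h1 i) j
    simp only [Matrix.smul_apply, smul_eq_mul, Matrix.zero_apply] at h3 ⊢
    exact mem_nonZeroDivisors_iff_right.mp hdet (M i j) (by rwa [mul_comm])
  have hYX : Y * X = (PowerSeries.X ^ c : PowerSeries A) • (1 : Matrix (Fin n) (Fin n) (PowerSeries A)) := by
    have h0 : X * (Y * X - (PowerSeries.X ^ c : PowerSeries A) • 1) = 0 := by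
      rw [Matrix.mul_sub, ← Matrix.mul_assoc, hXY, Matrix.mul_smul, Matrix.smul_mul, mul_one,
        one_mul, sub_self]
    have h1 := hcancel _ h0
    rwa [sub_eq_zero] at h1
  have hinj : Function.Injective (X.mulVec : (Fin n → PowerSeries A) → (Fin n → PowerSeries A)) := by
    intro v w hvw
    have h1 : X.det • v = X.det • w := by
      have h2 := congrArg (X.adjugate.mulVec) hvw
      rwa [Matrix.mulVec_mulVec, Matrix.mulVec_mulVec, Matrix.adjugate_mul,
        Matrix.smul_mulVec, Matrix.smul_mulVec, Matrix.one_mulVec,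
        Matrix.one_mulVec] at h2
    funext i
    have h2 := congrFun h1 i
    simp only [Pi.smul_apply, smul_eq_mul] at h2
    have h3 : (v i - w i) * X.det = 0 := by
      rw [sub_mul, mul_comm (v i), mul_comm (w i), h2, sub_self]
    exact sub_eq_zero.mp (mem_nonZeroDivisors_iff_right.mp hdet _ h3)
  refine ⟨⟨Y, hXY, hYX⟩, hdet, hinj, ?_⟩
  apply Module.Flat.of_forall_isTrivialRelation
  intro l f x hfx
  let LX := LinearMap.restrictScalars A (Matrix.mulVecLin X)
  let K : Submodule A (Fin n → PowerSeries A) := LinearMap.range LX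
  let LY := LinearMap.restrictScalars A (Matrix.mulVecLin Y)
  choose v hv using fun i => Submodule.Quotient.mk_surjective K (x i)
  have hmem : ∑ i, f i • v i ∈ K := by
    rw [← Submodule.Quotient.mk_eq_zero]
    calc (Submodule.Quotient.mk (∑ i, f i • v i) : (Fin n → PowerSeries A) ⧸ K)
        = K.mkQ (∑ i, f i • v i) := rfl
      _ = ∑ i, f i • K.mkQ (v i) := by rw [map_sum]; simp
      _ = ∑ i, f i • x i := by simp only [Submodule.mkQ_apply, hv]
      _ = 0 := hfx
  obtain ⟨g, hg⟩ := hmem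
  let Sh : (Fin n → PowerSeries A) →ₗ[A] (Fin n → PowerSeries A) :=
    LinearMap.pi fun j => (psShift A c).comp (LinearMap.proj j)
  let Tr : (Fin n → PowerSeries A) →ₗ[A] (Fin n → PowerSeries A) :=
    LinearMap.pi fun j => (psTrunc A c).comp (LinearMap.proj j)
  have hSh : ∀ w : Fin n → PowerSeries A, Sh ((PowerSeries.X ^ c : PowerSeries A) • w) = w := by
    intro w; funext j
    simp only [Sh, LinearMap.pi_apply, LinearMap.comp_apply, LinearMap.proj_apply, Pi.smul_apply,
      smul_eq_mul]
    exact psShift_X_pow_mul c (w j)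
  have hYXg : ∀ w : Fin n → PowerSeries A, LY (LX w) = (PowerSeries.X ^ c : PowerSeries A) • w := by
    intro w
    show Y.mulVec (X.mulVec w) = _
    rw [Matrix.mulVec_mulVec, hYX, Matrix.smul_mulVec, Matrix.one_mulVec]
  let h : Fin l → Fin n → PowerSeries A := fun i => Sh (LY (v i))
  have hgh : ∑ i, f i • h i = g := by
    have h1 : ∑ i, f i • h i = Sh (LY (∑ i, f i • v i)) := by
      rw [map_sum, map_sum]
      simp [h]
    rw [h1, ← hg, hYXg, hSh]
  let t : Fin l → Fin n → PowerSeries A := fun i => v i - LX (h i)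
  have hLXsum : ∑ i, f i • LX (h i) = LX (∑ i, f i • h i) := by
    rw [map_sum]; simp
  have ht0 : ∑ i, f i • t i = 0 := by
    simp only [t, smul_sub, Finset.sum_sub_distrib]
    rw [hLXsum, hgh, hg, sub_self]
  let t2 : Fin l → Fin n → PowerSeries A := fun i => Tr (t i)
  have ht2tr : ∀ i j, psTrunc A c (t2 i j) = t2 i j := by
    intro i j
    show psTrunc A c (psTrunc A c (t i j)) = _
    rw [psTrunc_psTrunc]
    rfl
  have ht20 : ∑ i, f i • t2 i = 0 := by
    have h1 : ∑ i, f i • t2 i = Tr (∑ i, f i • t i) := by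
      rw [map_sum]; simp [t2]
    rw [h1, ht0, map_zero]
  have hxt2 : ∀ i, K.mkQ (t2 i) = x i := by
    intro i
    have hti : K.mkQ (t i) = x i := by
      rw [← hv i]
      show _ = Submodule.Quotient.mk (v i)
      rw [Submodule.mkQ_apply]
      apply (Submodule.Quotient.eq K).mpr
      have h1 : t i - v i = -(LX (h i)) := by simp [t]
      rw [h1]
      exact Submodule.neg_mem _ ⟨h i, rfl⟩
    rw [← hti]
    rw [Submodule.mkQ_apply, Submodule.mkQ_apply]
    apply (Submodule.Quotient.eq K).mpr
    choose r hr using fun j => sub_psTrunc_dvd c (t i j)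
    refine ⟨W (fun j => -(r j)), ?_⟩
    show X.mulVec (W fun j => -(r j)) = t2 i - t i
    rw [hW]
    funext j
    simp only [Pi.smul_apply, smul_eq_mul, Pi.sub_apply]
    have ht2j : t2 i j = psTrunc A c (t i j) := rfl
    rw [ht2j, mul_neg, ← hr j, neg_sub]
  have key : ∀ w : Fin n → PowerSeries A, (∀ j, psTrunc A c (w j) = w j) →
      w = ∑ q : Fin n × Fin c, PowerSeries.coeff (R := A) (q.2 : ℕ) (w q.1) •
        (Pi.single q.1 ((PowerSeries.X : PowerSeries A) ^ (q.2 : ℕ)) : Fin n → PowerSeries A) := by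
    intro w hw
    funext j'
    symm
    rw [Finset.sum_apply]
    simp only [Pi.smul_apply, Pi.single_apply, smul_ite, smul_zero]
    rw [Fintype.sum_prod_type]
    simp only [Finset.sum_ite_irrel, Finset.sum_const_zero]
    rw [Finset.sum_ite_eq Finset.univ j'
      (fun j => ∑ d : Fin c, PowerSeries.coeff (R := A) (d : ℕ) (w j) • (PowerSeries.X : PowerSeries A) ^ (d : ℕ))]
    simp only [Finset.mem_univ, if_true]
    rw [← psTrunc_eq_sum, hw j']
  refine ⟨n * c,
    fun i p => PowerSeries.coeff (R := A) ((finProdFinEquiv.symm p).2 : ℕ) (t2 i (finProdFinEquiv.symm p).1),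
    fun p => K.mkQ (Pi.single (finProdFinEquiv.symm p).1 ((PowerSeries.X : PowerSeries A) ^ (((finProdFinEquiv.symm p).2 : Fin c) : ℕ))),
    ?_, ?_⟩
  · intro i
    calc x i = K.mkQ (t2 i) := (hxt2 i).symm
      _ = K.mkQ (∑ q : Fin n × Fin c, PowerSeries.coeff (R := A) (q.2 : ℕ) (t2 i q.1) •
            (Pi.single q.1 ((PowerSeries.X : PowerSeries A) ^ (q.2 : ℕ)) : Fin n → PowerSeries A)) := by
          rw [← key (t2 i) (ht2tr i)]
      _ = ∑ q : Fin n × Fin c, PowerSeries.coeff (R := A) (q.2 : ℕ) (t2 i q.1) •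
            K.mkQ (Pi.single q.1 ((PowerSeries.X : PowerSeries A) ^ (q.2 : ℕ))) := by
          rw [map_sum]
          exact Finset.sum_congr rfl fun q _ => by rw [map_smul]
      _ = ∑ p : Fin (n * c), PowerSeries.coeff (R := A) (((finProdFinEquiv.symm p).2 : Fin c) : ℕ) (t2 i (finProdFinEquiv.symm p).1) •
            K.mkQ (Pi.single (finProdFinEquiv.symm p).1 ((PowerSeries.X : PowerSeries A) ^ (((finProdFinEquiv.symm p).2 : Fin c) : ℕ))) := by
          exact (Fintype.sum_equiv finProdFinEquiv.symm _ _ fun p => rfl).symm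
  · intro p
    have h1 := congrFun ht20 (finProdFinEquiv.symm p).1
    have h2 : ∑ i, f i • (t2 i (finProdFinEquiv.symm p).1) = 0 := by
      simpa [Finset.sum_apply] using h1
    calc ∑ i, f i * PowerSeries.coeff (R := A) (((finProdFinEquiv.symm p).2 : Fin c) : ℕ) (t2 i (finProdFinEquiv.symm p).1)
        = PowerSeries.coeff (R := A) (((finProdFinEquiv.symm p).2 : Fin c) : ℕ) (∑ i, f i • t2 i (finProdFinEquiv.symm p).1) := by
          rw [map_sum]
          exact Finset.sum_congr rfl fun i _ => by rw [map_smul, smul_eq_mul]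
      _ = 0 := by rw [h2, map_zero]
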